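/- Let n ∈ ℝ³ be a unit vector and β ∈ ℝ³. With 𝒩 := [[0_{3,3}, −V_n],[V_n, (β·n) I₃]] and ℳ_N := [[0_{3,3}, −V_n],[−V_n, |β·n| I₃]], the following hold: (i) (ℳ_N z, z) = |β·n| ‖p‖² ≥ 0 for all z = (b, p) ∈ ℝ⁶ (so ℳ_N is monotone); (ii) Ker(ℳ_N − 𝒩) + Ker(ℳ_N + 𝒩) = ℝ⁶. -/

import Mathlib

open Matrix

/-- The cross-product matrix `V_α`, characterized by `V_α s = α × s`. -/
def crossMat (α : Fin 3 → ℝ) : Matrix (Fin 3) (Fin 3) ℝ :=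
  !![0, -α 2, α 1; α 2, 0, -α 0; -α 1, α 0, 0]

/-- Neumann boundary matrices of the Friedrichs form of the vector
diffusion–advection–reaction problem: with `𝒩 = [[0, −V_n],[V_n, (β·n) I₃]]` and
`ℳ_N = [[0, −V_n],[−V_n, |β·n| I₃]]` for a unit vector `n`:
(i) `(ℳ_N z, z) = |β·n| ‖p‖² ≥ 0` for all `z = (b, p)`;
(ii) `Ker(ℳ_N − 𝒩) + Ker(ℳ_N + 𝒩) = ℝ⁶`. -/
theorem stmt15 (n β : Fin 3 → ℝ) (hn : ∑ i, n i ^ 2 = 1) :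
    let N : Matrix (Fin 3 ⊕ Fin 3) (Fin 3 ⊕ Fin 3) ℝ :=
      Matrix.fromBlocks 0 (-crossMat n) (crossMat n) ((β ⬝ᵥ n) • 1)
    let MN : Matrix (Fin 3 ⊕ Fin 3) (Fin 3 ⊕ Fin 3) ℝ :=
      Matrix.fromBlocks 0 (-crossMat n) (-crossMat n) (|β ⬝ᵥ n| • 1)
    (∀ z : Fin 3 ⊕ Fin 3 → ℝ,
      MN.mulVec z ⬝ᵥ z = |β ⬝ᵥ n| * ∑ i, z (Sum.inr i) ^ 2 ∧ 0 ≤ MN.mulVec z ⬝ᵥ z) ∧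
    LinearMap.ker (MN - N).mulVecLin ⊔ LinearMap.ker (MN + N).mulVecLin = ⊤ := by
  intro N MN
  constructor
  · intro z
    have key : MN.mulVec z ⬝ᵥ z = |β ⬝ᵥ n| * ∑ i, z (Sum.inr i) ^ 2 := by
      simp only [MN, dotProduct, Matrix.mulVec, Fintype.sum_sum_type, Fin.sum_univ_three,
        Matrix.fromBlocks_apply₁₁, Matrix.fromBlocks_apply₁₂, Matrix.fromBlocks_apply₂₁,
        Matrix.fromBlocks_apply₂₂, Matrix.smul_apply, Matrix.one_apply, Matrix.zero_apply,
        Matrix.neg_apply, crossMat, Matrix.cons_val', Matrix.cons_val_zero, Matrix.cons_val_one,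
        Matrix.head_cons, Matrix.cons_val_two, Matrix.tail_cons, Matrix.empty_val', Matrix.cons_val_fin_one, Matrix.head_fin_const,
        Matrix.of_apply, smul_eq_mul]
      norm_num [Fin.ext_iff]
      ring
    refine ⟨key, ?_⟩
    rw [key]
    positivity
  · rw [eq_top_iff]
    rintro z -
    rw [Submodule.mem_sup]
    have hn3 : n 0 ^ 2 + n 1 ^ 2 + n 2 ^ 2 = 1 := by simpa [Fin.sum_univ_three] using hn
    set p : Fin 3 → ℝ := fun i => z (Sum.inr i) with hp
    set b : Fin 3 → ℝ := fun i => z (Sum.inl i) with hb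
    clear_value p b
    rcases le_or_gt 0 (β ⬝ᵥ n) with h | h
    · have habs : |β ⬝ᵥ n| = β ⬝ᵥ n := abs_of_nonneg h
      refine ⟨Sum.elim (fun i => (∑ j, b j * n j) * n i) p,
        ?_, Sum.elim (fun i => b i - (∑ j, b j * n j) * n i) (fun _ => 0),
        ?_, ?_⟩
      · rw [LinearMap.mem_ker, Matrix.mulVecLin_apply]
        simp only [MN, N]
        rw [habs]
        funext x
        rcases x with i | i <;> fin_cases i <;>
          simp only [Matrix.sub_apply, Matrix.add_apply, Matrix.mulVec, dotProduct,
            Fintype.sum_sum_type, Fin.sum_univ_three, Matrix.fromBlocks_apply₁₁,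
            Matrix.fromBlocks_apply₁₂, Matrix.fromBlocks_apply₂₁, Matrix.fromBlocks_apply₂₂,
            Matrix.smul_apply, Matrix.one_apply, Matrix.zero_apply, Matrix.neg_apply, crossMat,
            Matrix.cons_val', Matrix.cons_val_zero, Matrix.cons_val_one, Matrix.head_cons, Matrix.cons_val_two, Matrix.tail_cons,
            Matrix.empty_val', Matrix.cons_val_fin_one, Matrix.head_fin_const, Matrix.of_apply,
            smul_eq_mul, Sum.elim_inl, Sum.elim_inr, Pi.zero_apply] <;>
          norm_num [Fin.ext_iff] <;> first | tauto | ring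
      · rw [LinearMap.mem_ker, Matrix.mulVecLin_apply]
        simp only [MN, N]
        rw [habs]
        funext x
        rcases x with i | i <;> fin_cases i <;>
          simp only [Matrix.sub_apply, Matrix.add_apply, Matrix.mulVec, dotProduct,
            Fintype.sum_sum_type, Fin.sum_univ_three, Matrix.fromBlocks_apply₁₁,
            Matrix.fromBlocks_apply₁₂, Matrix.fromBlocks_apply₂₁, Matrix.fromBlocks_apply₂₂,
            Matrix.smul_apply, Matrix.one_apply, Matrix.zero_apply, Matrix.neg_apply, crossMat,
            Matrix.cons_val', Matrix.cons_val_zero, Matrix.cons_val_one, Matrix.head_cons, Matrix.cons_val_two, Matrix.tail_cons,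
            Matrix.empty_val', Matrix.cons_val_fin_one, Matrix.head_fin_const, Matrix.of_apply,
            smul_eq_mul, Sum.elim_inl, Sum.elim_inr, Pi.zero_apply] <;>
          norm_num [Fin.ext_iff] <;> first | tauto | ring
      · funext x
        rcases x with i | i <;> simp [hp, hb]
    · have habs : |β ⬝ᵥ n| = -(β ⬝ᵥ n) := abs_of_neg h
      refine ⟨Sum.elim
          ![-(β ⬝ᵥ n) * (p 1 * n 2 - p 2 * n 1), -(β ⬝ᵥ n) * (p 2 * n 0 - p 0 * n 2),
            -(β ⬝ᵥ n) * (p 0 * n 1 - p 1 * n 0)]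
          (fun i => p i - (∑ j, p j * n j) * n i),
        ?_, Sum.elim
          ![b 0 + (β ⬝ᵥ n) * (p 1 * n 2 - p 2 * n 1), b 1 + (β ⬝ᵥ n) * (p 2 * n 0 - p 0 * n 2),
            b 2 + (β ⬝ᵥ n) * (p 0 * n 1 - p 1 * n 0)]
          (fun i => (∑ j, p j * n j) * n i),
        ?_, ?_⟩
      · rw [LinearMap.mem_ker, Matrix.mulVecLin_apply]
        simp only [MN, N]
        rw [habs]
        funext x
        rcases x with i | i
        · fin_cases i <;>
            simp only [Matrix.sub_apply, Matrix.add_apply, Matrix.mulVec, dotProduct,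
              Fintype.sum_sum_type, Fin.sum_univ_three, Matrix.fromBlocks_apply₁₁,
              Matrix.fromBlocks_apply₁₂, Matrix.fromBlocks_apply₂₁, Matrix.fromBlocks_apply₂₂,
              Matrix.smul_apply, Matrix.one_apply, Matrix.zero_apply, Matrix.neg_apply, crossMat,
              Matrix.cons_val', Matrix.cons_val_zero, Matrix.cons_val_one, Matrix.head_cons, Matrix.cons_val_two, Matrix.tail_cons,
              Matrix.empty_val', Matrix.cons_val_fin_one, Matrix.head_fin_const, Matrix.of_apply,
              smul_eq_mul, Sum.elim_inl, Sum.elim_inr, Pi.zero_apply] <;>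
            norm_num [Fin.ext_iff] <;> first | tauto | ring
        · fin_cases i <;>
            simp only [Matrix.sub_apply, Matrix.add_apply, Matrix.mulVec, dotProduct,
              Fintype.sum_sum_type, Fin.sum_univ_three, Matrix.fromBlocks_apply₁₁,
              Matrix.fromBlocks_apply₁₂, Matrix.fromBlocks_apply₂₁, Matrix.fromBlocks_apply₂₂,
              Matrix.smul_apply, Matrix.one_apply, Matrix.zero_apply, Matrix.neg_apply, crossMat,
              Matrix.cons_val', Matrix.cons_val_zero, Matrix.cons_val_one, Matrix.head_cons, Matrix.cons_val_two, Matrix.tail_cons,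
              Matrix.empty_val', Matrix.cons_val_fin_one, Matrix.head_fin_const, Matrix.of_apply,
              smul_eq_mul, Sum.elim_inl, Sum.elim_inr, Pi.zero_apply] <;>
            norm_num [Fin.ext_iff]
          · linear_combination (2 * (β 0 * n 0 + β 1 * n 1 + β 2 * n 2) * p 0) * hn3
          · linear_combination (2 * (β 0 * n 0 + β 1 * n 1 + β 2 * n 2) * p 1) * hn3
          · linear_combination (2 * (β 0 * n 0 + β 1 * n 1 + β 2 * n 2) * p 2) * hn3
      · rw [LinearMap.mem_ker, Matrix.mulVecLin_apply]
        simp only [MN, N]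
        rw [habs]
        funext x
        rcases x with i | i <;> fin_cases i <;>
          simp only [Matrix.sub_apply, Matrix.add_apply, Matrix.mulVec, dotProduct,
            Fintype.sum_sum_type, Fin.sum_univ_three, Matrix.fromBlocks_apply₁₁,
            Matrix.fromBlocks_apply₁₂, Matrix.fromBlocks_apply₂₁, Matrix.fromBlocks_apply₂₂,
            Matrix.smul_apply, Matrix.one_apply, Matrix.zero_apply, Matrix.neg_apply, crossMat,
            Matrix.cons_val', Matrix.cons_val_zero, Matrix.cons_val_one, Matrix.head_cons, Matrix.cons_val_two, Matrix.tail_cons,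
            Matrix.empty_val', Matrix.cons_val_fin_one, Matrix.head_fin_const, Matrix.of_apply,
            smul_eq_mul, Sum.elim_inl, Sum.elim_inr, Pi.zero_apply] <;>
          norm_num [Fin.ext_iff] <;> try (first | tauto | ring)
        all_goals tauto
      · funext x
        rcases x with i | i
        · fin_cases i <;> simp [hb] <;> ring
        · simp [hp, Fin.sum_univ_three]
          try ring
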